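/- For any odd cut C = ∂(X) of an r-graph G with |C| = r, both C-contractions G/X and G/X̄ are r-graphs; moreover, if G is 3-edge-connected then both contractions are 3-edge-connected. -/

import Mathlib

noncomputable section
open scoped Classical

/-- The underlying simple graph of a multigraph given by `ends`. -/
def toSimple {V E : Type} (ends : E → Sym2 V) : SimpleGraph V where
  Adj u w := u ≠ w ∧ ∃ e, ends e = s(u, w)
  symm := by
    constructor
    rintro u w ⟨hne, e, he⟩
    exact ⟨hne.symm, e, by rw [he]; exact Sym2.eq_swap⟩
  loopless := by constructor; rintro u ⟨hne, -⟩; exact hne rfl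

/-- The edge cut `∂(X)`. -/
def Cut {V E : Type} (ends : E → Sym2 V) (X : Set V) : Set E :=
  {e | ∃ u ∈ X, ∃ w, w ∉ X ∧ ends e = s(u, w)}

/-- Degree of a vertex (counting multiplicities). -/
noncomputable def deg {V E : Type} (ends : E → Sym2 V) (v : V) : ℕ :=
  {e | v ∈ ends e}.ncard

/-- An `r`-graph: a loopless connected `r`-regular multigraph in which every odd
cut has at least `r` edges. -/
def IsRGraph {V E : Type} (r : ℕ) (ends : E → Sym2 V) : Prop :=
  (∀ e, ¬ (ends e).IsDiag) ∧ (toSimple ends).Connected ∧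
    (∀ v, deg ends v = r) ∧ ∀ X : Set V, Odd X.ncard → r ≤ (Cut ends X).ncard

/-- The vertex map of the contraction `G/X`: all of `X` is shrunk to a single
new vertex, the other vertices are kept. -/
noncomputable def contractVert {V : Type} (X : Set V) (v : V) : ↥Xᶜ ⊕ Unit :=
  if h : v ∈ X then Sum.inr () else Sum.inl ⟨v, h⟩

/-- The contraction `G/X`: the shore `X` is shrunk to a single contraction
vertex; the edges inside `X` disappear. -/
noncomputable def contractEnds {V E : Type} (ends : E → Sym2 V) (X : Set V) :
    {e : E // ¬ ∀ v ∈ ends e, v ∈ X} → Sym2 (↥Xᶜ ⊕ Unit) :=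
  fun e => (ends e.val).map (contractVert X)

/-- `G` is 3-edge-connected: connected and every cut separating two nonempty
shores has at least three edges. -/
def ThreeEdgeConnected {V E : Type} (ends : E → Sym2 V) : Prop :=
  (toSimple ends).Connected ∧
    ∀ X : Set V, X.Nonempty → Xᶜ.Nonempty → 3 ≤ (Cut ends X).ncard

namespace Stmt14Aux

variable {V E : Type}

lemma sym2_rep (z : Sym2 V) : ∃ u w, z = s(u, w) := by
  induction z using Sym2.ind with | _ u w => exact ⟨u, w, rfl⟩

lemma cut_compl (ends : E → Sym2 V) (S : Set V) : Cut ends Sᶜ = Cut ends S := by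
  ext e
  constructor
  · rintro ⟨u, hu, w, hw, he⟩
    exact ⟨w, by simpa using hw, u, by simpa using hu, by rw [he]; exact Sym2.eq_swap⟩
  · rintro ⟨u, hu, w, hw, he⟩
    exact ⟨w, by simpa using hw, u, by simpa using hu, by rw [he]; exact Sym2.eq_swap⟩

lemma contractVert_mem {S : Set V} {v : V} (h : v ∈ S) : contractVert S v = Sum.inr () :=
  dif_pos h

lemma contractVert_not_mem {S : Set V} {v : V} (h : v ∉ S) :
    contractVert S v = Sum.inl ⟨v, h⟩ := dif_neg h

lemma contractVert_eq_inr_iff {S : Set V} {v : V} :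
    contractVert S v = Sum.inr () ↔ v ∈ S := by
  unfold contractVert; split_ifs with h <;> simp [h]

lemma contractVert_eq_cases {S : Set V} {u w : V} (h : contractVert S u = contractVert S w) :
    u = w ∨ (u ∈ S ∧ w ∈ S) := by
  by_cases h1 : u ∈ S <;> by_cases h2 : w ∈ S
  · exact Or.inr ⟨h1, h2⟩
  · rw [contractVert_mem h1, contractVert_not_mem h2] at h; simp at h
  · rw [contractVert_not_mem h1, contractVert_mem h2] at h; simp at h
  · rw [contractVert_not_mem h1, contractVert_not_mem h2] at h
    simp only [Sum.inl.injEq, Subtype.mk.injEq] at h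
    exact Or.inl h

lemma contractVert_surj {S : Set V} (hS : S.Nonempty) (a : ↥Sᶜ ⊕ Unit) :
    ∃ v, contractVert S v = a := by
  cases a with
  | inl x => exact ⟨x.val, contractVert_not_mem x.prop⟩
  | inr u => obtain ⟨s, hs⟩ := hS; exact ⟨s, by cases u; exact contractVert_mem hs⟩

lemma mem_contractEnds_inl {ends : E → Sym2 V} {S : Set V}
    {e : {e : E // ¬ ∀ v ∈ ends e, v ∈ S}} {x : ↥Sᶜ} :
    Sum.inl x ∈ contractEnds ends S e ↔ x.val ∈ ends e.val := by
  simp only [contractEnds, Sym2.mem_map]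
  constructor
  · rintro ⟨b, hb, hfb⟩
    by_cases hbS : b ∈ S
    · rw [contractVert_mem hbS] at hfb; simp at hfb
    · rw [contractVert_not_mem hbS] at hfb
      obtain rfl : b = x.val := congrArg Subtype.val (Sum.inl.inj hfb)
      exact hb
  · intro hx
    exact ⟨x.val, hx, contractVert_not_mem x.prop⟩

lemma mem_contractEnds_inr {ends : E → Sym2 V} {S : Set V}
    {e : {e : E // ¬ ∀ v ∈ ends e, v ∈ S}} :
    Sum.inr () ∈ contractEnds ends S e ↔ ∃ v ∈ ends e.val, v ∈ S := by
  simp only [contractEnds, Sym2.mem_map]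
  constructor
  · rintro ⟨b, hb, hfb⟩; exact ⟨b, hb, contractVert_eq_inr_iff.mp hfb⟩
  · rintro ⟨v, hv, hvS⟩; exact ⟨v, hv, contractVert_mem hvS⟩

lemma mem_cut_contract {ends : E → Sym2 V} {S : Set V} {Y : Set (↥Sᶜ ⊕ Unit)}
    {e : {e : E // ¬ ∀ v ∈ ends e, v ∈ S}} :
    e ∈ Cut (contractEnds ends S) Y ↔ e.val ∈ Cut ends (contractVert S ⁻¹' Y) := by
  constructor
  · rintro ⟨a, ha, b, hb, hab⟩
    obtain ⟨u, w, huw⟩ := sym2_rep (ends e.val)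
    rw [show contractEnds ends S e = Sym2.map (contractVert S) (ends e.val) from rfl, huw,
      Sym2.map_pair_eq, Sym2.eq_iff] at hab
    rcases hab with ⟨h1, h2⟩ | ⟨h1, h2⟩
    · exact ⟨u, by rw [Set.mem_preimage, h1]; exact ha,
        w, fun hmem => hb (h2 ▸ hmem), huw⟩
    · exact ⟨w, by rw [Set.mem_preimage, h2]; exact ha,
        u, fun hmem => hb (h1 ▸ hmem), by rw [huw]; exact Sym2.eq_swap⟩
  · rintro ⟨u, hu, w, hw, huw⟩
    exact ⟨contractVert S u, hu, contractVert S w, hw, by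
      show Sym2.map (contractVert S) (ends e.val) = _
      rw [huw, Sym2.map_pair_eq]⟩

lemma cut_contract_ncard [Fintype V] [Fintype E] (ends : E → Sym2 V) (S : Set V)
    (Y : Set (↥Sᶜ ⊕ Unit)) :
    (Cut (contractEnds ends S) Y).ncard = (Cut ends (contractVert S ⁻¹' Y)).ncard := by
  have himg : Subtype.val '' (Cut (contractEnds ends S) Y)
      = Cut ends (contractVert S ⁻¹' Y) := by
    ext e
    simp only [Set.mem_image]
    constructor
    · rintro ⟨e', he', rfl⟩; exact mem_cut_contract.mp he'
    · intro he
      obtain ⟨u, hu, w, hw, huw⟩ := id he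
      refine ⟨⟨e, ?_⟩, mem_cut_contract.mpr he, rfl⟩
      intro hall
      have h1 : contractVert S u = Sum.inr () :=
        contractVert_mem (hall u (by rw [huw]; exact Sym2.mem_mk_left u w))
      have h2 : contractVert S w = Sum.inr () :=
        contractVert_mem (hall w (by rw [huw]; exact Sym2.mem_mk_right u w))
      exact hw (by rw [Set.mem_preimage, h2, ← h1]; exact hu)
  rw [← himg, Set.ncard_image_of_injective _ Subtype.val_injective]

lemma deg_contract_inl [Fintype V] [Fintype E] (ends : E → Sym2 V) (S : Set V) (x : ↥Sᶜ) :
    deg (contractEnds ends S) (Sum.inl x) = deg ends x.val := by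
  unfold deg
  have himg : Subtype.val '' {e | Sum.inl x ∈ contractEnds ends S e} = {e | x.val ∈ ends e} := by
    ext e
    simp only [Set.mem_image, Set.mem_setOf_eq]
    constructor
    · rintro ⟨e', he', rfl⟩; exact mem_contractEnds_inl.mp he'
    · intro he
      exact ⟨⟨e, fun hall => x.prop (hall x.val he)⟩, mem_contractEnds_inl.mpr he, rfl⟩
  rw [← himg, Set.ncard_image_of_injective _ Subtype.val_injective]

lemma deg_contract_inr [Fintype V] [Fintype E] (ends : E → Sym2 V) (S : Set V) :
    deg (contractEnds ends S) (Sum.inr ()) = (Cut ends S).ncard := by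
  unfold deg
  have himg : Subtype.val '' {e | Sum.inr () ∈ contractEnds ends S e} = Cut ends S := by
    ext e
    simp only [Set.mem_image, Set.mem_setOf_eq]
    constructor
    · rintro ⟨e', he', rfl⟩
      obtain ⟨v, hv, hvS⟩ := mem_contractEnds_inr.mp he'
      have hne := e'.prop
      push_neg at hne
      obtain ⟨q, hq, hqS⟩ := hne
      obtain ⟨u, w, huw⟩ := sym2_rep (ends e'.val)
      rw [huw, Sym2.mem_iff] at hv hq
      rcases hv with rfl | rfl <;> rcases hq with rfl | rfl
      · exact absurd hvS hqS
      · exact ⟨v, hvS, q, hqS, huw⟩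
      · exact ⟨v, hvS, q, hqS, by rw [huw]; exact Sym2.eq_swap⟩
      · exact absurd hvS hqS
    · rintro ⟨u, hu, w, hw, huw⟩
      refine ⟨⟨e, fun hall => hw (hall w (by rw [huw]; exact Sym2.mem_mk_right u w))⟩, ?_, rfl⟩
      exact mem_contractEnds_inr.mpr ⟨u, by rw [huw]; exact Sym2.mem_mk_left u w, hu⟩
  rw [← himg, Set.ncard_image_of_injective _ Subtype.val_injective]

lemma ncard_Y_of_inr_not_mem [Fintype V] (S : Set V) (Y : Set (↥Sᶜ ⊕ Unit))
    (h : Sum.inr () ∉ Y) : (Sum.inl ⁻¹' Y : Set ↥Sᶜ).ncard = Y.ncard := by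
  have hY : Sum.inl '' (Sum.inl ⁻¹' Y : Set ↥Sᶜ) = Y := by
    ext a
    cases a with
    | inl x => simp
    | inr u => cases u; simp [h]
  conv_rhs => rw [← hY]
  rw [Set.ncard_image_of_injective _ Sum.inl_injective]

lemma ncard_Y_of_inr_mem [Fintype V] (S : Set V) (Y : Set (↥Sᶜ ⊕ Unit))
    (h : Sum.inr () ∈ Y) : Y.ncard = (Sum.inl ⁻¹' Y : Set ↥Sᶜ).ncard + 1 := by
  have hY : Y = insert (Sum.inr ()) (Sum.inl '' (Sum.inl ⁻¹' Y : Set ↥Sᶜ)) := by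
    ext a
    cases a with
    | inl x => simp
    | inr u => cases u; simp [h]
  conv_lhs => rw [hY]
  rw [Set.ncard_insert_of_notMem (by simp),
    Set.ncard_image_of_injective _ Sum.inl_injective]

lemma preimage_ncard_inr_not_mem [Fintype V] (S : Set V) (Y : Set (↥Sᶜ ⊕ Unit))
    (h : Sum.inr () ∉ Y) : (contractVert S ⁻¹' Y).ncard = Y.ncard := by
  have hdec : contractVert S ⁻¹' Y = Subtype.val '' (Sum.inl ⁻¹' Y : Set ↥Sᶜ) := by
    ext v
    constructor
    · intro hy
      by_cases hv : v ∈ S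
      · rw [Set.mem_preimage, contractVert_mem hv] at hy; exact absurd hy h
      · rw [Set.mem_preimage, contractVert_not_mem hv] at hy; exact ⟨⟨v, hv⟩, hy, rfl⟩
    · rintro ⟨x, hx, rfl⟩
      rw [Set.mem_preimage, contractVert_not_mem x.prop]
      exact hx
  rw [hdec, Set.ncard_image_of_injective _ Subtype.val_injective,
    ncard_Y_of_inr_not_mem S Y h]

lemma preimage_ncard_inr_mem [Fintype V] (S : Set V) (Y : Set (↥Sᶜ ⊕ Unit))
    (h : Sum.inr () ∈ Y) : (contractVert S ⁻¹' Y).ncard + 1 = S.ncard + Y.ncard := by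
  have hdec : contractVert S ⁻¹' Y = S ∪ Subtype.val '' (Sum.inl ⁻¹' Y : Set ↥Sᶜ) := by
    ext v
    constructor
    · intro hy
      by_cases hv : v ∈ S
      · exact Or.inl hv
      · rw [Set.mem_preimage, contractVert_not_mem hv] at hy
        exact Or.inr ⟨⟨v, hv⟩, hy, rfl⟩
    · rintro (hv | ⟨x, hx, rfl⟩)
      · rw [Set.mem_preimage, contractVert_mem hv]; exact h
      · rw [Set.mem_preimage, contractVert_not_mem x.prop]; exact hx
  have hdisj : Disjoint S (Subtype.val '' (Sum.inl ⁻¹' Y : Set ↥Sᶜ)) := by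
    rw [Set.disjoint_left]
    rintro a ha ⟨x, _, rfl⟩
    exact x.prop ha
  rw [hdec, Set.ncard_union_eq hdisj,
    Set.ncard_image_of_injective _ Subtype.val_injective, ncard_Y_of_inr_mem S Y h]
  omega

lemma reachable_contract {ends : E → Sym2 V} {S : Set V} {u v : V}
    (h : (toSimple ends).Reachable u v) :
    (toSimple (contractEnds ends S)).Reachable (contractVert S u) (contractVert S v) := by
  obtain ⟨p⟩ := h
  induction p with
  | nil => exact SimpleGraph.Reachable.refl _
  | cons hadj p ih =>
    rename_i a b c
    obtain ⟨hne, e, he⟩ := hadj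
    by_cases hc : contractVert S a = contractVert S b
    · rw [hc]; exact ih
    · have hadj' : (toSimple (contractEnds ends S)).Adj (contractVert S a) (contractVert S b) := by
        refine ⟨hc, ⟨e, ?_⟩, ?_⟩
        · intro hall
          exact hc (by rw [contractVert_mem (hall a (by rw [he]; exact Sym2.mem_mk_left a b)),
            contractVert_mem (hall b (by rw [he]; exact Sym2.mem_mk_right a b))])
        · show Sym2.map (contractVert S) (ends e) = _
          rw [he, Sym2.map_pair_eq]
      exact hadj'.reachable.trans ih

lemma connected_contract {ends : E → Sym2 V} {S : Set V} (hS : S.Nonempty)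
    (hconn : (toSimple ends).Connected) :
    (toSimple (contractEnds ends S)).Connected := by
  rw [SimpleGraph.connected_iff]
  refine ⟨?_, ⟨Sum.inr ()⟩⟩
  intro a b
  obtain ⟨u, rfl⟩ := contractVert_surj hS a
  obtain ⟨v, rfl⟩ := contractVert_surj hS b
  exact reachable_contract (hconn.preconnected u v)

lemma isRGraph_contract [Fintype V] [Fintype E] {ends : E → Sym2 V} {r : ℕ}
    (hG : IsRGraph r ends) (S : Set V) (hS : S.Nonempty)
    (hcutS : (Cut ends S).ncard = r)
    (hoddcut : ∀ Y : Set (↥Sᶜ ⊕ Unit), Odd Y.ncard →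
      r ≤ (Cut ends (contractVert S ⁻¹' Y)).ncard) :
    IsRGraph r (contractEnds ends S) := by
  obtain ⟨hloop, hconn, hdeg, hodd⟩ := hG
  refine ⟨?_, connected_contract hS hconn, ?_, ?_⟩
  · rintro ⟨e, hE⟩
    obtain ⟨u, w, huw⟩ := sym2_rep (ends e)
    show ¬ (Sym2.map (contractVert S) (ends e)).IsDiag
    rw [huw, Sym2.map_pair_eq, Sym2.mk_isDiag_iff]
    intro hfe
    rcases contractVert_eq_cases hfe with rfl | ⟨h1, h2⟩
    · exact hloop e (by rw [huw]; exact Sym2.mk_isDiag_iff.mpr rfl)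
    · apply hE
      intro v hv
      rw [huw, Sym2.mem_iff] at hv
      rcases hv with rfl | rfl
      · exact h1
      · exact h2
  · rintro (x | u)
    · rw [deg_contract_inl, hdeg]
    · cases u; rw [deg_contract_inr, hcutS]
  · intro Y hY
    rw [cut_contract_ncard]
    exact hoddcut Y hY

lemma threeEC_contract [Fintype V] [Fintype E] {ends : E → Sym2 V} {S : Set V}
    (hS : S.Nonempty) (h3 : ThreeEdgeConnected ends) :
    ThreeEdgeConnected (contractEnds ends S) := by
  refine ⟨connected_contract hS h3.1, ?_⟩
  intro Y hYne hYcne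
  rw [cut_contract_ncard]
  apply h3.2
  · obtain ⟨a, ha⟩ := hYne
    obtain ⟨v, rfl⟩ := contractVert_surj hS a
    exact ⟨v, ha⟩
  · obtain ⟨a, ha⟩ := hYcne
    obtain ⟨v, rfl⟩ := contractVert_surj hS a
    exact ⟨v, ha⟩

end Stmt14Aux

open Stmt14Aux in
/-- For any odd cut `C = ∂(X)` of an `r`-graph `G` with `|C| = r`, both
`C`-contractions `G/X` and `G/X̄` are `r`-graphs; moreover, if `G` is
3-edge-connected then both contractions are 3-edge-connected. -/
theorem stmt14 {V E : Type} [Fintype V] [Fintype E]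
    (ends : E → Sym2 V) (r : ℕ) (hr : 3 ≤ r) (hG : IsRGraph r ends)
    (X : Set V) (hodd : Odd X.ncard) (hcut : (Cut ends X).ncard = r) :
    IsRGraph r (contractEnds ends X) ∧ IsRGraph r (contractEnds ends Xᶜ) ∧
      (ThreeEdgeConnected ends →
        ThreeEdgeConnected (contractEnds ends X) ∧
          ThreeEdgeConnected (contractEnds ends Xᶜ)) := by
  have hXne : X.Nonempty := by
    apply Set.nonempty_of_ncard_ne_zero
    intro h
    rw [h] at hodd
    simp at hodd
  have hXcne : Xᶜ.Nonempty := by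
    rw [Set.nonempty_iff_ne_empty]
    intro hc
    rw [Set.compl_empty_iff] at hc
    have hcutempty : Cut ends X = ∅ := by
      ext e
      simp only [Set.mem_empty_iff_false, iff_false]
      rintro ⟨u, hu, w, hw, he⟩
      exact hw (hc ▸ Set.mem_univ w)
    rw [hcutempty, Set.ncard_empty] at hcut
    omega
  have hcutXc : (Cut ends Xᶜ).ncard = r := by rw [cut_compl]; exact hcut
  have hoddX : ∀ Y : Set (↥Xᶜ ⊕ Unit), Odd Y.ncard →
      r ≤ (Cut ends (contractVert X ⁻¹' Y)).ncard := by
    intro Y hY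
    apply hG.2.2.2
    by_cases hinr : Sum.inr () ∈ Y
    · have h1 := preimage_ncard_inr_mem X Y hinr
      rw [Nat.odd_iff] at hY hodd ⊢
      omega
    · rw [preimage_ncard_inr_not_mem X Y hinr]
      exact hY
  have hoddXc : ∀ Y : Set (↥Xᶜᶜ ⊕ Unit), Odd Y.ncard →
      r ≤ (Cut ends (contractVert Xᶜ ⁻¹' Y)).ncard := by
    intro Y hY
    by_cases hinr : Sum.inr () ∈ Y
    · have hYc : Sum.inr () ∉ Yᶜ := by simp [hinr]
      have h1 : (contractVert Xᶜ ⁻¹' Yᶜ).ncard = Yᶜ.ncard :=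
        preimage_ncard_inr_not_mem _ _ hYc
      have h2 : Y.ncard + Yᶜ.ncard = X.ncard + 1 := by
        have h3 := Set.ncard_add_ncard_compl Y
        have h4 : Nat.card (↥Xᶜᶜ ⊕ Unit) = X.ncard + 1 := by
          rw [Nat.card_sum, Nat.card_coe_set_eq, compl_compl, Nat.card_unique]
        rw [h3, h4]
      have hOdd : Odd (contractVert Xᶜ ⁻¹' Yᶜ).ncard := by
        rw [Nat.odd_iff] at hY hodd ⊢
        omega
      have hle := hG.2.2.2 _ hOdd
      rwa [Set.preimage_compl, cut_compl] at hle
    · apply hG.2.2.2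
      rw [preimage_ncard_inr_not_mem _ _ hinr]
      exact hY
  exact ⟨isRGraph_contract hG X hXne hcut hoddX,
    isRGraph_contract hG Xᶜ hXcne hcutXc hoddXc,
    fun h3 => ⟨threeEC_contract hXne h3, threeEC_contract hXcne h3⟩⟩
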